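/- Let K_1, K_2 be fractal k-cubes of order n with digit sets D_1, D_2. Then for every α ∈ A_k, the family of intersections F_α = K_1 ∩ (K_2 + α) satisfies the system of equations F_α = ⋃_{β ∈ A_k, α ⊑ β} (F_β + G_{αβ})/n, where G_{αβ} = D_1 ∩ (D_2 + nα − β). -/
import Mathlib


open Set Pointwise MeasureTheory

noncomputable section

/-- Points of `ℝ^k`. -/
abbrev Pt (k : ℕ) := Fin k → ℝ

/-- A vector with all coordinates in `{0, 1, …, n−1}`. -/
def IsDigit (n : ℕ) {k : ℕ} (d : Pt k) : Prop :=
  ∀ i, ∃ m : ℕ, m < n ∧ d i = (m : ℝ)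

/-- A digit set: a nonempty subset of `{0, 1, …, n−1}^k`. -/
def IsDigitSet (n : ℕ) {k : ℕ} (D : Set (Pt k)) : Prop :=
  D.Nonempty ∧ ∀ d ∈ D, IsDigit n d

/-- `K` is the fractal `k`-cube of order `n` with digit set `D`:
a nonempty compact set with `nK = K + D`. -/
def IsFractalCube (n : ℕ) {k : ℕ} (D K : Set (Pt k)) : Prop :=
  K.Nonempty ∧ IsCompact K ∧ (n : ℝ) • K = K + D

/-- `α ∈ A_k = {−1, 0, 1}^k`. -/
def IsAk {k : ℕ} (α : Pt k) : Prop :=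
  ∀ i, α i = -1 ∨ α i = 0 ∨ α i = 1

/-- The unit cube `P = [0,1]^k`. -/
def unitCube (k : ℕ) : Set (Pt k) := {x | ∀ i, 0 ≤ x i ∧ x i ≤ 1}

/-- The face `P_α = P ∩ (P + α)`. -/
def face {k : ℕ} (α : Pt k) : Set (Pt k) :=
  unitCube k ∩ ((fun x => x + α) '' unitCube k)

/-- `α ⊑ β` : `β i = α i` whenever `α i ≠ 0`. -/
def SqLe {k : ℕ} (α β : Pt k) : Prop := ∀ i, α i ≠ 0 → β i = α i

/-- `α ⊏ β`. -/
def SqLt {k : ℕ} (α β : Pt k) : Prop := SqLe α β ∧ α ≠ β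

/-- `F_α = K₁ ∩ (K₂ + α)`. -/
def interF {k : ℕ} (K1 K2 : Set (Pt k)) (α : Pt k) : Set (Pt k) :=
  K1 ∩ ((fun x => x + α) '' K2)

/-- `G_{αβ} = D₁ ∩ (D₂ + nα − β)`. -/
def Gab (n : ℕ) {k : ℕ} (D1 D2 : Set (Pt k)) (α β : Pt k) : Set (Pt k) :=
  D1 ∩ ((fun x => x + ((n : ℝ) • α - β)) '' D2)

/-- `G_α = G_{αα} = D₁ ∩ (D₂ + (n−1)α)`. -/
def Ga (n : ℕ) {k : ℕ} (D1 D2 : Set (Pt k)) (α : Pt k) : Set (Pt k) :=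
  Gab n D1 D2 α α

/-- `β ≻ α` : there is a chain `α = α₀ ⊏ α₁ ⊏ … ⊏ α_p = β` in `A_k` (`p ≥ 1`)
with all `F_{α_j}` nonempty and all `G_{α_{j−1} α_j}` nonempty. -/
def GSucc (n : ℕ) {k : ℕ} (D1 D2 K1 K2 : Set (Pt k)) (β α : Pt k) : Prop :=
  ∃ p : ℕ, 0 < p ∧ ∃ c : ℕ → Pt k, c 0 = α ∧ c p = β ∧
    (∀ j ≤ p, IsAk (c j)) ∧
    (∀ j < p, SqLt (c j) (c (j + 1))) ∧
    (∀ j ≤ p, (interF K1 K2 (c j)).Nonempty) ∧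
    (∀ j < p, (Gab n D1 D2 (c j) (c (j + 1))).Nonempty)

/-- `β ≽ α`. -/
def GSuccEq (n : ℕ) {k : ℕ} (D1 D2 K1 K2 : Set (Pt k)) (β α : Pt k) : Prop :=
  GSucc n D1 D2 K1 K2 β α ∨ β = α

/-- The map `S_d(x) = (x + d)/n`. -/
def Sdig (n : ℕ) {k : ℕ} (d : Pt k) : Pt k → Pt k :=
  fun x => (n : ℝ)⁻¹ • (x + d)

/-- The `p`-th refinement digit set
`D^(p) = { n^{p−1} d₁ + n^{p−2} d₂ + … + d_p : (d₁, …, d_p) ∈ D^p }`. -/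
def refineD (n p : ℕ) {k : ℕ} (D : Set (Pt k)) : Set (Pt k) :=
  {x | ∃ f : Fin p → Pt k, (∀ j, f j ∈ D) ∧
    x = ∑ j : Fin p, ((n : ℝ) ^ (p - 1 - (j : ℕ))) • f j}

/-- A maximal vertex of the structure graph: `F_β ≠ ∅` and no `γ ≻ β`. -/
def IsMaxVertex (n : ℕ) {k : ℕ} (D1 D2 K1 K2 : Set (Pt k)) (β : Pt k) : Prop :=
  IsAk β ∧ (interF K1 K2 β).Nonempty ∧ ¬∃ γ, IsAk γ ∧ GSucc n D1 D2 K1 K2 γ β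

/-- The product `∏ #G_{α_j α_{j+1}}` over consecutive pairs of a chain. -/
def chainProd (n : ℕ) {k : ℕ} (D1 D2 : Set (Pt k)) : List (Pt k) → ℕ
  | [] => 1
  | [_] => 1
  | a :: b :: rest => (Gab n D1 D2 a b).ncard * chainProd n D1 D2 (b :: rest)

/-- A chain `α = α₁ ⊏ α₂ ⊏ … ⊏ α_p = β` inside `Γ_α` ending at a maximal vertex `β`. -/
def IsMaxChainFrom (n : ℕ) {k : ℕ} (D1 D2 K1 K2 : Set (Pt k)) (α : Pt k)
    (c : List (Pt k)) : Prop :=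
  c ≠ [] ∧ c.head? = some α ∧ List.Chain' SqLt c ∧
  (∀ β ∈ c, IsAk β ∧ GSuccEq n D1 D2 K1 K2 β α) ∧
  ∃ β, c.getLast? = some β ∧ IsMaxVertex n D1 D2 K1 K2 β


/-- A fractal cube lies in the unit cube. -/
lemma fractal_bounds {k n : ℕ} (hn : 2 ≤ n) {D K : Set (Pt k)}
    (hD : IsDigitSet n D) (hK : IsFractalCube n D K) :
    ∀ x ∈ K, ∀ i, 0 ≤ x i ∧ x i ≤ 1 := by
  obtain ⟨hne, hcpt, heq⟩ := hK
  have hn1 : (1 : ℝ) < (n : ℝ) := by exact_mod_cast (by omega : 1 < n)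
  intro x hx i
  have hcont : Continuous fun y : Pt k => y i := continuous_apply i
  constructor
  · obtain ⟨x₁, hx₁K, hmin⟩ := hcpt.exists_isMinOn hne hcont.continuousOn
    have hmem : (n : ℝ) • x₁ ∈ (n : ℝ) • K := smul_mem_smul_set hx₁K
    rw [heq] at hmem
    obtain ⟨y, hy, d, hd, hyd⟩ := hmem
    have hdi : 0 ≤ d i := by
      obtain ⟨m, hm, hdm⟩ := (hD.2 d hd) i
      rw [hdm]; positivity
    have h1 : y i + d i = (n : ℝ) * x₁ i := by
      have := congrFun hyd i; simpa using this
    have h2 : x₁ i ≤ y i := isMinOn_iff.mp hmin y hy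
    have hx1 : 0 ≤ x₁ i := by nlinarith
    exact le_trans hx1 (isMinOn_iff.mp hmin x hx)
  · obtain ⟨x₁, hx₁K, hmax⟩ := hcpt.exists_isMaxOn hne hcont.continuousOn
    have hmem : (n : ℝ) • x₁ ∈ (n : ℝ) • K := smul_mem_smul_set hx₁K
    rw [heq] at hmem
    obtain ⟨y, hy, d, hd, hyd⟩ := hmem
    have hdi : d i ≤ (n : ℝ) - 1 := by
      obtain ⟨m, hm, hdm⟩ := (hD.2 d hd) i
      rw [hdm]
      have : (m : ℝ) + 1 ≤ (n : ℝ) := by exact_mod_cast hm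
      linarith
    have h1 : y i + d i = (n : ℝ) * x₁ i := by
      have := congrFun hyd i; simpa using this
    have h2 : y i ≤ x₁ i := isMaxOn_iff.mp hmax y hy
    have hx1 : x₁ i ≤ 1 := by nlinarith
    exact le_trans (isMaxOn_iff.mp hmax x hx) hx1

/-- the intersection theorem:
`F_α = ⋃_{β ∈ A_k, α ⊑ β} (F_β + G_{αβ})/n`. -/
theorem interF_system {k n : ℕ} (hk : 1 ≤ k) (hn : 2 ≤ n)
    (D1 D2 K1 K2 : Set (Pt k)) (hD1 : IsDigitSet n D1) (hD2 : IsDigitSet n D2)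
    (hK1 : IsFractalCube n D1 K1) (hK2 : IsFractalCube n D2 K2)
    (α : Pt k) (hα : IsAk α) :
    interF K1 K2 α =
      ⋃ β ∈ {β : Pt k | IsAk β ∧ SqLe α β},
        (n : ℝ)⁻¹ • (interF K1 K2 β + Gab n D1 D2 α β) := by
  have hn0 : (n : ℝ) ≠ 0 := by
    have : (0 : ℝ) < (n : ℝ) := by exact_mod_cast (by omega : 0 < n)
    exact ne_of_gt this
  have hB1 := fractal_bounds hn hD1 hK1
  have hB2 := fractal_bounds hn hD2 hK2
  ext x
  simp only [Set.mem_iUnion, Set.mem_setOf_eq, exists_prop]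
  constructor
  · rintro ⟨hx1, z, hz, hzx⟩
    -- n•x ∈ K1 + D1
    have hm1 : (n : ℝ) • x ∈ (n : ℝ) • K1 := smul_mem_smul_set hx1
    rw [hK1.2.2] at hm1
    obtain ⟨y₁, hy₁, d₁, hd₁, h₁⟩ := hm1
    have hm2 : (n : ℝ) • z ∈ (n : ℝ) • K2 := smul_mem_smul_set hz
    rw [hK2.2.2] at hm2
    obtain ⟨y₂, hy₂, d₂, hd₂, h₂⟩ := hm2
    set β : Pt k := y₁ - y₂ with hβdef
    -- coordinate relation
    have hco : ∀ i, β i = (n : ℝ) * α i + d₂ i - d₁ i := by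
      intro i
      have e1 : y₁ i + d₁ i = (n : ℝ) * x i := by
        have := congrFun h₁ i; simpa using this
      have e2 : y₂ i + d₂ i = (n : ℝ) * z i := by
        have := congrFun h₂ i; simpa using this
      have e3 : z i + α i = x i := congrFun hzx i
      have : β i = y₁ i - y₂ i := rfl
      rw [this]; nlinarith [e1, e2, e3]
    have hby : ∀ i, -1 ≤ β i ∧ β i ≤ 1 := by
      intro i
      obtain ⟨hl1, hr1⟩ := hB1 y₁ hy₁ i
      obtain ⟨hl2, hr2⟩ := hB2 y₂ hy₂ i
      have : β i = y₁ i - y₂ i := rfl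
      constructor <;> (rw [this]; linarith)
    have hforce : ∀ i, α i ≠ 0 → β i = α i := by
      intro i hi
      obtain ⟨m₁, hm₁, hdm₁⟩ := (hD1.2 d₁ hd₁) i
      obtain ⟨m₂, hm₂, hdm₂⟩ := (hD2.2 d₂ hd₂) i
      have hm₁' : (m₁ : ℝ) + 1 ≤ (n : ℝ) := by exact_mod_cast hm₁
      have hm₂' : (m₂ : ℝ) + 1 ≤ (n : ℝ) := by exact_mod_cast hm₂
      have hm₁0 : (0 : ℝ) ≤ (m₁ : ℝ) := by positivity
      have hm₂0 : (0 : ℝ) ≤ (m₂ : ℝ) := by positivity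
      have hc := hco i
      rw [hdm₁, hdm₂] at hc
      obtain ⟨hbl, hbr⟩ := hby i
      rcases hα i with h | h | h
      · rw [h] at hc ⊢; linarith
      · exact absurd h hi
      · rw [h] at hc ⊢; linarith
    have hAkβ : IsAk β := by
      intro i
      rcases eq_or_ne (α i) 0 with h0 | h0
      · obtain ⟨m₁, hm₁, hdm₁⟩ := (hD1.2 d₁ hd₁) i
        obtain ⟨m₂, hm₂, hdm₂⟩ := (hD2.2 d₂ hd₂) i
        have hc := hco i
        rw [hdm₁, hdm₂, h0] at hc
        have hc' : β i = ((m₂ : ℤ) - (m₁ : ℤ) : ℤ) := by push_cast; linarith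
        obtain ⟨hbl, hbr⟩ := hby i
        have hzl : (-1 : ℤ) ≤ (m₂ : ℤ) - m₁ := by
          have : ((-1 : ℤ) : ℝ) ≤ (((m₂ : ℤ) - m₁ : ℤ) : ℝ) := by
            rw [← hc']; push_cast; linarith
          exact_mod_cast this
        have hzr : (m₂ : ℤ) - m₁ ≤ 1 := by
          have : (((m₂ : ℤ) - m₁ : ℤ) : ℝ) ≤ ((1 : ℤ) : ℝ) := by
            rw [← hc']; push_cast; linarith
          exact_mod_cast this
        have : (m₂ : ℤ) - m₁ = -1 ∨ (m₂ : ℤ) - m₁ = 0 ∨ (m₂ : ℤ) - m₁ = 1 := by omega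
        rcases this with h | h | h
        · left; rw [h] at hc'; rw [hc']; norm_num
        · right; left; rw [h] at hc'; rw [hc']; norm_num
        · right; right; rw [h] at hc'; rw [hc']; norm_num
      · rcases hα i with h | h | h
        · left; rw [hforce i h0, h]
        · exact absurd h h0
        · right; right; rw [hforce i h0, h]
    refine ⟨β, ⟨hAkβ, fun i hi => hforce i hi⟩, ?_⟩
    -- x = n⁻¹ • (y₁ + d₁)
    refine ⟨y₁ + d₁, Set.add_mem_add ⟨hy₁, ⟨y₂, hy₂, ?_⟩⟩ ⟨hd₁, ⟨d₂, hd₂, ?_⟩⟩, ?_⟩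
    · show y₂ + β = y₁; rw [hβdef]; abel
    · show d₂ + ((n : ℝ) • α - β) = d₁
      funext i
      have hc := hco i
      simp only [Pi.add_apply, Pi.sub_apply, Pi.smul_apply, smul_eq_mul]
      linarith
    · show (n : ℝ)⁻¹ • (y₁ + d₁) = x
      have h₁' : y₁ + d₁ = (n : ℝ) • x := h₁
      rw [h₁', smul_smul, inv_mul_cancel₀ hn0, one_smul]
  · rintro ⟨β, ⟨hAkβ, hsq⟩, w, hw, hwx⟩
    obtain ⟨u, hu, v, hv, huv⟩ := hw
    have huv' : u + v = w := huv
    have hwx' : (n : ℝ)⁻¹ • w = x := hwx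
    obtain ⟨hu1, u₂, hu₂, hu₂eq⟩ := hu
    obtain ⟨hv1, e, he, heeq⟩ := hv
    -- x ∈ K1
    have hm1 : u + v ∈ K1 + D1 := Set.add_mem_add hu1 hv1
    rw [← hK1.2.2] at hm1
    obtain ⟨a, ha, hna⟩ := hm1
    have hna' : (n : ℝ) • a = u + v := hna
    have hm2 : u₂ + e ∈ K2 + D2 := Set.add_mem_add hu₂ he
    rw [← hK2.2.2] at hm2
    obtain ⟨b, hb, hnb⟩ := hm2
    have hnb' : (n : ℝ) • b = u₂ + e := hnb
    have hx : x = (n : ℝ)⁻¹ • (u + v) := by rw [huv', hwx']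
    constructor
    · have : x = a := by
        rw [hx, ← hna', smul_smul, inv_mul_cancel₀ hn0, one_smul]
      rw [this]; exact ha
    · refine ⟨b, hb, ?_⟩
      show b + α = x
      have key : u + v = (n : ℝ) • (b + α) := by
        have hu₂eq' : u₂ + β = u := hu₂eq
        have heeq' : e + ((n : ℝ) • α - β) = v := heeq
        rw [smul_add, hnb', ← hu₂eq', ← heeq']
        show (u₂ + β) + (e + ((n : ℝ) • α - β)) = u₂ + e + (n : ℝ) • α
        abel
      rw [hx, key, smul_smul, inv_mul_cancel₀ hn0, one_smul]
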